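/- At the first slot s_p of every period p, the AoI under the auxiliary algorithm η̂ equals the AoI under the optimal algorithm π* for every source m: h^η̂_m(s_p) = h^{π*}_m(s_p). -/

import Mathlib

open MeasureTheory ProbabilityTheory

namespace AgingBandits

/-! ### System model

A single-hop wireless network with `M` sources, `N` unreliable ON/OFF channels and one
destination, evolving in discrete slots `t = 1, 2, …`.  At the beginning of each slot each
source independently generates a packet with probability `lam`; each source keeps only its
freshest undelivered packet.  In each slot the learning algorithm selects one source and one
channel; the selected source's packet (or a dummy packet if its queue is empty) is delivered
iff the selected channel is ON.  Channel states are coupled through a single i.i.d. uniform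
sequence `U`: channel `n` is ON in slot `t` iff `U t ≤ mu n`. -/

/-- The observation available to the source policy in a slot: the packet generations of the
slot, the current AoI of every source, and the generation times of the packets currently
waiting in the sources' queues (after the generations of the slot). -/
structure SrcObs (M : ℕ) where
  arr : Fin M → Bool
  age : Fin M → ℕ
  queue : Fin M → Option ℕ

/-- A source policy: maps the source history `H_A(t) = {a(1), h(1), …, a(t), h(t)}`
(together with the generation times of the queued packets) to the source selected in slot
`t`. -/
def SourcePolicy (M : ℕ) : Type := List (SrcObs M) → Fin M

/-- A queue-independent channel policy: maps the channel history
`H_B(t) = {n(1), b(1), …, n(t-1), b(t-1)}` of previously selected channels and observed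
channel states, together with a fresh uniform random seed (allowing randomized policies),
to the channel selected in slot `t`. -/
def ChannelPolicy (N : ℕ) : Type := List (Fin N × Bool) → ℝ → Fin N

/-- A queue-dependent channel policy: additionally observes, for each past slot and for the
current slot, whether the system was empty (no undelivered data packet in any queue). -/
def QChannelPolicy (N : ℕ) : Type := List (Fin N × Bool × Bool) → Bool → ℝ → Fin N

/-- A queue-independent channel policy regarded as a (degenerate) queue-dependent one. -/
def liftQI {N : ℕ} (pb : ChannelPolicy N) : QChannelPolicy N :=
  fun hist _ v => pb (hist.map fun x => (x.1, x.2.1)) v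

/-- A source policy is work-conserving if it never selects a source with an empty queue
(i.e. never transmits a dummy packet) while some source has an undelivered data packet. -/
def WorkConserving {M : ℕ} (pa : SourcePolicy M) : Prop :=
  ∀ (L : List (SrcObs M)) (o : SrcObs M),
    (∃ m, (o.queue m).isSome) → (o.queue (pa (L ++ [o]))).isSome

/-- The state of the network at the end of a slot:  `tau m` is the generation time of the
latest packet of source `m` delivered to the destination, `queue m` is the generation time
of the freshest undelivered packet of source `m` (if any), `chHist` records
(selected channel, observed state, system-empty flag) for every elapsed slot, `srcHist`
records the source observations of every elapsed slot, and `selCh`, `selSrc`, `emp` are the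
channel and source selected in, and the empty-system indicator `E(t)` of, the last slot. -/
structure State (M N : ℕ) where
  tau : Fin M → ℕ
  queue : Fin M → Option ℕ
  chHist : List (Fin N × Bool × Bool)
  srcHist : List (SrcObs M)
  selCh : Fin N
  selSrc : Fin M
  emp : Bool

variable {M N : ℕ} [NeZero M] [NeZero N]

/-- Initial state (before slot `1`): `τ_m = 0`, all queues empty. -/
def initState (M N : ℕ) [NeZero M] [NeZero N] : State M N :=
  ⟨fun _ => 0, fun _ => none, [], [], 0, 0, true⟩

open scoped Classical in
/-- One slot of the dynamics.  At the beginning of slot `t`, packet generations `a` refresh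
the queues; the source selector and the channel policy make their selections; the selected
channel is ON iff `u ≤ mu nsel` (coupled channel states); on a successful transmission of a
data packet, `τ` is updated to the generation time of the delivered packet and the packet
leaves its queue. -/
noncomputable def step (mu : Fin N → ℝ) (sel : List (SrcObs M) → Fin M)
    (pb : QChannelPolicy N) (t : ℕ) (a : Fin M → Bool) (u v : ℝ) (s : State M N) :
    State M N :=
  let q1 : Fin M → Option ℕ := fun m => if a m then some t else s.queue m
  let obs : SrcObs M := ⟨a, fun m => t - s.tau m, q1⟩
  let srcHist := s.srcHist ++ [obs]
  let empty : Bool := decide (∀ m, q1 m = none)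
  let msel := sel srcHist
  let nsel := pb s.chHist empty v
  let isOn : Bool := decide (u ≤ mu nsel)
  let chHist := s.chHist ++ [(nsel, isOn, empty)]
  match isOn, q1 msel with
  | true, some g =>
      ⟨Function.update s.tau msel g, Function.update q1 msel none,
        chHist, srcHist, nsel, msel, empty⟩
  | _, _ => ⟨s.tau, q1, chHist, srcHist, nsel, msel, empty⟩

/-- The state at the end of slot `t`, starting from the empty initial state, given the
per-slot source selector `sel`, the queue-dependent channel policy `pb`, the packet
generation stream `a`, the channel-coupling stream `u` and the policy-randomization
stream `v`. -/
noncomputable def run (mu : Fin N → ℝ) (sel : ℕ → List (SrcObs M) → Fin M)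
    (pb : QChannelPolicy N) (a : ℕ → Fin M → Bool) (u v : ℕ → ℝ) : ℕ → State M N
  | 0 => initState M N
  | t + 1 => step mu (sel (t + 1)) pb (t + 1) (a (t + 1)) (u (t + 1)) (v (t + 1))
      (run mu sel pb a u v t)

/-! ### Probabilistic model -/

/-- Index of the independent sources of randomness: the channel-coupling uniforms `U t`,
the policy-randomization uniforms `V t`, and the packet generations `A t m`. -/
inductive Idx (M : ℕ) where
  | u : ℕ → Idx M
  | v : ℕ → Idx M
  | a : ℕ → Fin M → Idx M

/-- Value type of each randomness source. -/
def IdxType {M : ℕ} : Idx M → Type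
  | .u _ => ℝ
  | .v _ => ℝ
  | .a _ _ => Bool

instance {M : ℕ} : ∀ i : Idx M, MeasurableSpace (IdxType i)
  | .u _ => (inferInstance : MeasurableSpace ℝ)
  | .v _ => (inferInstance : MeasurableSpace ℝ)
  | .a _ _ => (inferInstance : MeasurableSpace Bool)

/-- The family of all randomness sources, as a dependent family of random variables. -/
def family {Ω : Type*} {M : ℕ} (U V : ℕ → Ω → ℝ) (A : ℕ → Fin M → Ω → Bool) :
    ∀ i : Idx M, Ω → IdxType i
  | .u t => U t
  | .v t => V t
  | .a t m => A t m

/-- A network configuration `(λ, μ⃗)` together with its underlying probability space and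
primitive random processes: `U t` (channel coupling) and `V t` (policy randomization) are
i.i.d. uniform on `[0,1]`, `A t m` are i.i.d. Bernoulli(`λ`) packet generations, and all of
them are mutually independent.  Channel `n` is ON in slot `t` iff `U t ≤ mu n`, so that
`P(channel n ON) = mu n`, i.i.d. over time, and the channel states are coupled
monotonically across channels. -/
structure Config (M N : ℕ) : Type 1 where
  (lam : ℝ)
  (mu : Fin N → ℝ)
  (Ω : Type)
  [mΩ : MeasurableSpace Ω]
  (P : Measure Ω)
  (probP : IsProbabilityMeasure P)
  (U : ℕ → Ω → ℝ)
  (V : ℕ → Ω → ℝ)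
  (A : ℕ → Fin M → Ω → Bool)
  (lam_mem : lam ∈ Set.Ioo (0 : ℝ) 1)
  (mu_mem : ∀ n, mu n ∈ Set.Ioc (0 : ℝ) 1)
  (U_meas : ∀ t, Measurable (U t))
  (V_meas : ∀ t, Measurable (V t))
  (A_meas : ∀ t m, Measurable (A t m))
  (U_unif : ∀ t, P.map (U t) = volume.restrict (Set.Icc (0 : ℝ) 1))
  (V_unif : ∀ t, P.map (V t) = volume.restrict (Set.Icc (0 : ℝ) 1))
  (A_bern : ∀ t m, P {ω | A t m ω = true} = ENNReal.ofReal lam)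
  (indep : iIndepFun (family U V A) P)

attribute [instance] Config.mΩ Config.probP

/-- The trajectory of the network under configuration `cfg`, per-slot source selector `sel`
and channel policy `pb`, on the sample path `ω`. -/
noncomputable def Config.run (cfg : Config M N) (sel : ℕ → List (SrcObs M) → Fin M)
    (pb : QChannelPolicy N) (ω : cfg.Ω) : ℕ → State M N :=
  AgingBandits.run cfg.mu sel pb (fun t m => cfg.A t m ω) (fun t => cfg.U t ω)
    (fun t => cfg.V t ω)

/-- The AoI `h_m(t) = t - τ_m(t)` of source `m` at (the beginning of) slot `t` under the
learning algorithm `(pa, pb)`. -/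
noncomputable def Config.age (cfg : Config M N) (pa : SourcePolicy M)
    (pb : QChannelPolicy N) (ω : cfg.Ω) (t : ℕ) (m : Fin M) : ℕ :=
  t - (cfg.run (fun _ L => pa L) pb ω (t - 1)).tau m

/-- The channel `n(t)` selected in slot `t` by the learning algorithm `(pa, pb)`. -/
noncomputable def Config.chan (cfg : Config M N) (pa : SourcePolicy M)
    (pb : QChannelPolicy N) (ω : cfg.Ω) (t : ℕ) : Fin N :=
  (cfg.run (fun _ L => pa L) pb ω t).selCh

/-- The expected total AoI `E[Σ_{m=1}^M Σ_{t=1}^T h_m(t)]` of the learning algorithm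
`(pa, pb)`. -/
noncomputable def Config.expTotalAge (cfg : Config M N) (pa : SourcePolicy M)
    (pb : QChannelPolicy N) (T : ℕ) : ℝ :=
  ∑ m : Fin M, ∑ t ∈ Finset.Icc 1 T, ∫ ω, (cfg.age pa pb ω t m : ℝ) ∂cfg.P

/-- The channel policy of the optimal (genie) algorithm `π*`: select the channel `n*` of
highest reliability in every slot. -/
def optChannel (N : ℕ) (nstar : Fin N) : QChannelPolicy N := fun _ _ _ => nstar

/-- The AoI regret `R^π(T)` of the algorithm `π = (pa, pb)` relative to the optimal
algorithm `π* = (paStar, n*)`. -/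
noncomputable def Config.regret (cfg : Config M N) (nstar : Fin N)
    (paStar pa : SourcePolicy M) (pb : QChannelPolicy N) (T : ℕ) : ℝ :=
  cfg.expTotalAge pa pb T - cfg.expTotalAge paStar (optChannel N nstar) T

/-- The expected number of suboptimal channel choices
`E[K^π(T)] = Σ_{t=1}^T P(n(t) ≠ n*)` of the algorithm `(pa, pb)`. -/
noncomputable def Config.expSubopt (cfg : Config M N) (nstar : Fin N)
    (pa : SourcePolicy M) (pb : QChannelPolicy N) (T : ℕ) : ℝ :=
  ∑ t ∈ Finset.Icc 1 T, (cfg.P {ω | cfg.chan pa pb ω t ≠ nstar}).toReal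

end AgingBandits

namespace AgingBandits

/-- Empirical reliability estimate `μ̂_n` of channel `n` computed from the observation
history: the average of the observed states of channel `n` over the exploration slots
(slots in which the system was empty and a dummy packet was transmitted); `0` if channel
`n` has not been explored yet. -/
noncomputable def estimate {N : ℕ} (hist : List (Fin N × Bool × Bool)) (n : Fin N) : ℝ :=
  let obs := hist.filterMap fun x => if x.1 = n ∧ x.2.2 = true then some x.2.1 else none
  if obs.length = 0 then 0 else (obs.count true : ℝ) / obs.length

/-- The queue-dependent channel policy `η̄_b` of the order-optimal learning algorithm
(Algorithm 2): when the system is empty, select a channel uniformly at random (using the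
fresh uniform seed `v`) and use the transmitted dummy packet to update the empirical
estimates; when the system is nonempty, select the channel with the highest current
empirical estimate. -/
noncomputable def etabarB (N : ℕ) [NeZero N] : QChannelPolicy N :=
  fun hist empty v =>
    if empty then ⟨⌊v * N⌋₊ % N, Nat.mod_lt _ (Nat.pos_of_ne_zero (NeZero.ne N))⟩
    else ((List.finRange N).argmax (estimate hist)).getD
      ⟨0, Nat.pos_of_ne_zero (NeZero.ne N)⟩

variable {M N : ℕ} [NeZero M] [NeZero N]

/-- The trajectory of the optimal algorithm `π* = (paStar, n*)`. -/
noncomputable def Config.optRun (cfg : Config M N) (paStar : SourcePolicy M)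
    (nstar : Fin N) (ω : cfg.Ω) : ℕ → State M N :=
  cfg.run (fun _ L => paStar L) (optChannel N nstar) ω

/-- The trajectory of the auxiliary algorithm `η̂`: in every slot `t` it selects the same
source `m*(t)` as the optimal algorithm `π*` (transmitting a dummy packet if that source's
queue is empty) and the channel chosen by the policy `η̄_b`. -/
noncomputable def Config.auxRun (cfg : Config M N) (paStar : SourcePolicy M)
    (nstar : Fin N) (ω : cfg.Ω) : ℕ → State M N :=
  cfg.run (fun t _ => (cfg.optRun paStar nstar ω t).selSrc) (etabarB N) ω

/-- The AoI `h^η̂_m(t)` of source `m` at slot `t` under the auxiliary algorithm `η̂`. -/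
noncomputable def Config.auxAge (cfg : Config M N) (paStar : SourcePolicy M)
    (nstar : Fin N) (ω : cfg.Ω) (t : ℕ) (m : Fin M) : ℕ :=
  t - (cfg.auxRun paStar nstar ω (t - 1)).tau m

/-- The AoI `h^{π*}_m(t)` of source `m` at slot `t` under the optimal algorithm `π*`. -/
noncomputable def Config.optAge (cfg : Config M N) (paStar : SourcePolicy M)
    (nstar : Fin N) (ω : cfg.Ω) (t : ℕ) (m : Fin M) : ℕ :=
  t - (cfg.optRun paStar nstar ω (t - 1)).tau m

/-- The first slot `s_p` of the `p`-th period (`p ≥ 1`) of the trajectory of the auxiliary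
algorithm `η̂`: `s_1 = 1`, and `s_{p+1}` is the next slot `t` at which the system becomes
empty, i.e. `E(t-1) = 0` and `E(t) = 1`. -/
noncomputable def Config.periodStart (cfg : Config M N) (paStar : SourcePolicy M)
    (nstar : Fin N) (ω : cfg.Ω) : ℕ → ℕ
  | 0 => 0
  | 1 => 1
  | p + 2 =>
      sInf {t | cfg.periodStart paStar nstar ω (p + 1) < t ∧
        (cfg.auxRun paStar nstar ω (t - 1)).emp = false ∧
        (cfg.auxRun paStar nstar ω t).emp = true}

/-- The last slot `f_p = s_{p+1} - 1` of the `p`-th period. -/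
noncomputable def Config.periodEnd (cfg : Config M N) (paStar : SourcePolicy M)
    (nstar : Fin N) (ω : cfg.Ω) (p : ℕ) : ℕ :=
  cfg.periodStart paStar nstar ω (p + 1) - 1

/-- The channel `n̄(p)` used by the policy `η̄_b` throughout the nonempty phase of period
`p`: the channel selected at the first nonempty slot of period `p` (the estimates, and
hence the selected channel, do not change during a nonempty phase). -/
noncomputable def Config.nbar (cfg : Config M N) (paStar : SourcePolicy M)
    (nstar : Fin N) (ω : cfg.Ω) (p : ℕ) : Fin N :=
  (cfg.auxRun paStar nstar ω
    (sInf {t | cfg.periodStart paStar nstar ω p ≤ t ∧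
      (cfg.auxRun paStar nstar ω t).emp = false})).selCh

/-- The cumulative AoI `y^η̂_m(p) = Σ_{t=s_p}^{f_p} h^η̂_m(t)` of source `m` during period
`p` under the auxiliary algorithm `η̂`. -/
noncomputable def Config.periodAge (cfg : Config M N) (paStar : SourcePolicy M)
    (nstar : Fin N) (ω : cfg.Ω) (p : ℕ) (m : Fin M) : ℕ :=
  ∑ t ∈ Finset.Icc (cfg.periodStart paStar nstar ω p) (cfg.periodEnd paStar nstar ω p),
    cfg.auxAge paStar nstar ω t m

end AgingBandits

namespace AgingBandits

set_option linter.unusedSectionVars false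

variable {M N : ℕ} [NeZero M] [NeZero N]

/-- Generation time of the latest arrival of source `m` up to and including slot `t`
(`0` if no arrival yet). -/
def latest (a : ℕ → Fin M → Bool) (m : Fin M) : ℕ → ℕ
  | 0 => 0
  | t + 1 => if a (t + 1) m then t + 1 else latest a m t

lemma latest_le (a : ℕ → Fin M → Bool) (m : Fin M) : ∀ t, latest a m t ≤ t
  | 0 => le_refl 0
  | t + 1 => by
      unfold latest
      split
      · exact le_refl _
      · exact le_trans (latest_le a m t) (Nat.le_succ t)

lemma latest_succ_le (a : ℕ → Fin M → Bool) (m : Fin M) (t : ℕ) :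
    latest a m t ≤ latest a m (t + 1) := by
  show latest a m t ≤ if a (t + 1) m then t + 1 else latest a m t
  split
  · exact le_trans (latest_le a m t) (Nat.le_succ t)
  · exact le_refl _

lemma step_emp' (mu : Fin N → ℝ) (sel : List (SrcObs M) → Fin M) (pb : QChannelPolicy N)
    (t : ℕ) (a : Fin M → Bool) (u v : ℝ) (s : State M N) :
    (step mu sel pb t a u v s).emp =
      decide (∀ m, (if a m then some t else s.queue m) = none) := by
  unfold step
  dsimp only
  split <;> rfl

lemma step_selSrc' (mu : Fin N → ℝ) (sel : List (SrcObs M) → Fin M) (pb : QChannelPolicy N)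
    (t : ℕ) (a : Fin M → Bool) (u v : ℝ) (s : State M N) :
    (step mu sel pb t a u v s).selSrc =
      sel (s.srcHist ++ [⟨a, fun m => t - s.tau m, fun m => if a m then some t else s.queue m⟩]) := by
  unfold step
  dsimp only
  split <;> rfl

/-- The invariant maintained along any trajectory: `τ_m` is at most the latest generation
time, a queued packet is exactly the freshest generated packet, and if the queue of `m`
is empty then the freshest packet of `m` has been delivered. -/
def Inv (a : ℕ → Fin M → Bool) (s : State M N) (t : ℕ) : Prop :=
  ∀ m, s.tau m ≤ latest a m t ∧
    (∀ g, s.queue m = some g → g = latest a m t) ∧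
    (s.queue m = none → s.tau m = latest a m t)

lemma inv_init (a : ℕ → Fin M → Bool) : Inv a (initState M N) 0 := by
  intro m
  refine ⟨le_refl _, ?_, fun _ => rfl⟩
  intro g hg
  simp [initState] at hg

lemma q1_some (a : ℕ → Fin M → Bool) (s : State M N) (t : ℕ) (h : Inv a s t) :
    ∀ m g, (if a (t + 1) m then some (t + 1) else s.queue m) = some g →
      g = latest a m (t + 1) := by
  intro m g hg
  unfold latest
  by_cases hm : a (t + 1) m
  · simp [hm] at hg ⊢; omega
  · simp [hm] at hg ⊢; exact (h m).2.1 g hg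

lemma q1_none (a : ℕ → Fin M → Bool) (s : State M N) (t : ℕ) (h : Inv a s t) :
    ∀ m, (if a (t + 1) m then some (t + 1) else s.queue m) = none →
      s.tau m = latest a m (t + 1) := by
  intro m hg
  unfold latest
  by_cases hm : a (t + 1) m
  · simp [hm] at hg
  · simp [hm] at hg ⊢; exact (h m).2.2 hg

lemma inv_step (mu : Fin N → ℝ) (sel : List (SrcObs M) → Fin M) (pb : QChannelPolicy N)
    (a : ℕ → Fin M → Bool) (t : ℕ) (u v : ℝ) (s : State M N) (h : Inv a s t) :
    Inv a (step mu sel pb (t + 1) (a (t + 1)) u v s) (t + 1) := by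
  have htau : ∀ m, s.tau m ≤ latest a m (t + 1) :=
    fun m => le_trans (h m).1 (latest_succ_le a m t)
  intro m
  unfold step
  dsimp only
  split
  · next g hOn hq =>
    by_cases hm : m = sel (s.srcHist ++ [⟨a (t + 1), fun m => (t+1) - s.tau m,
        fun m => if a (t + 1) m then some (t+1) else s.queue m⟩])
    · subst hm
      have hg := q1_some a s t h _ g hq
      refine ⟨?_, ?_, ?_⟩
      · simp only [Function.update_self]; exact le_of_eq hg
      · intro g' hg'; simp only [Function.update_self] at hg'; exact absurd hg' (by simp)
      · intro _; simp only [Function.update_self]; exact hg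
    · refine ⟨?_, ?_, ?_⟩ <;> simp only [Function.update_of_ne hm]
      · exact htau m
      · exact q1_some a s t h m
      · exact q1_none a s t h m
  · refine ⟨htau m, q1_some a s t h m, q1_none a s t h m⟩

lemma inv_run (mu : Fin N → ℝ) (sel : ℕ → List (SrcObs M) → Fin M) (pb : QChannelPolicy N)
    (a : ℕ → Fin M → Bool) (u v : ℕ → ℝ) : ∀ t, Inv a (run mu sel pb a u v t) t
  | 0 => inv_init a
  | t + 1 => inv_step mu (sel (t + 1)) pb a t (u (t + 1)) (v (t + 1)) _
      (inv_run mu sel pb a u v t)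

/-- One-step comparison of `τ` between the auxiliary trajectory and the optimal
trajectory. -/
lemma step_tau_le (mu : Fin N → ℝ) (nstar : Fin N) (hmu : ∀ n, mu n ≤ mu nstar)
    (selA selO : List (SrcObs M) → Fin M) (pbA : QChannelPolicy N)
    (a : ℕ → Fin M → Bool) (t : ℕ) (u vA vO : ℝ) (sA sO : State M N)
    (hA : Inv a sA t) (hO : Inv a sO t) (hle : ∀ m, sA.tau m ≤ sO.tau m)
    (hmsel : selA (sA.srcHist ++ [⟨a (t + 1), fun m => (t+1) - sA.tau m,
        fun m => if a (t + 1) m then some (t+1) else sA.queue m⟩]) =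
      selO (sO.srcHist ++ [⟨a (t + 1), fun m => (t+1) - sO.tau m,
        fun m => if a (t + 1) m then some (t+1) else sO.queue m⟩])) :
    ∀ m, (step mu selA pbA (t + 1) (a (t + 1)) u vA sA).tau m ≤
      (step mu selO (optChannel N nstar) (t + 1) (a (t + 1)) u vO sO).tau m := by
  have htauO : ∀ m, sO.tau m ≤ latest a m (t + 1) :=
    fun m => le_trans (hO m).1 (latest_succ_le a m t)
  intro m
  unfold step
  dsimp only
  split
  · -- the auxiliary algorithm delivers a packet
    next g hOn hq =>
    have hu : u ≤ mu nstar := le_trans (of_decide_eq_true hOn) (hmu _)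
    have hg := q1_some a sA t hA _ g hq
    rw [hmsel] at hg
    split
    · next g' hOn' hq' =>
      have hg' := q1_some a sO t hO _ g' hq'
      by_cases hm : m = selA (sA.srcHist ++ [⟨a (t + 1), fun m => (t+1) - sA.tau m,
          fun m => if a (t + 1) m then some (t+1) else sA.queue m⟩])
      · subst hm
        rw [hmsel]
        simp only [Function.update_self]
        exact le_of_eq (hg.trans hg'.symm)
      · have hmO : m ≠ selO (sO.srcHist ++ [⟨a (t + 1), fun m => (t+1) - sO.tau m,
            fun m => if a (t + 1) m then some (t+1) else sO.queue m⟩]) := hmsel ▸ hm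
        simp only [Function.update_of_ne hm, Function.update_of_ne hmO]
        exact hle m
    · next h2 =>
      have hOnO : decide (u ≤ mu (optChannel N nstar sO.chHist
          (decide (∀ m, (if a (t+1) m then some (t+1) else sO.queue m) = none)) vO)) = true :=
        decide_eq_true hu
      have hqO : (if a (t+1) (selO (sO.srcHist ++ [⟨a (t + 1), fun m => (t+1) - sO.tau m,
          fun m => if a (t + 1) m then some (t+1) else sO.queue m⟩])) then some (t+1)
          else sO.queue (selO (sO.srcHist ++ [⟨a (t + 1), fun m => (t+1) - sO.tau m,
          fun m => if a (t + 1) m then some (t+1) else sO.queue m⟩]))) = none := by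
        rcases hcase : (if a (t+1) (selO (sO.srcHist ++ [⟨a (t + 1), fun m => (t+1) - sO.tau m,
            fun m => if a (t + 1) m then some (t+1) else sO.queue m⟩])) then some (t+1)
            else sO.queue (selO (sO.srcHist ++ [⟨a (t + 1), fun m => (t+1) - sO.tau m,
            fun m => if a (t + 1) m then some (t+1) else sO.queue m⟩]))) with _ | g'
        · exact hcase
        · exact absurd hcase (by exact fun hc => h2 g' hOnO hc)
      have htO := q1_none a sO t hO _ hqO
      by_cases hm : m = selA (sA.srcHist ++ [⟨a (t + 1), fun m => (t+1) - sA.tau m,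
          fun m => if a (t + 1) m then some (t+1) else sA.queue m⟩])
      · subst hm
        rw [hmsel]
        simp only [Function.update_self]
        exact le_of_eq (hg.trans htO.symm)
      · simp only [Function.update_of_ne hm]
        exact hle m
  · -- the auxiliary algorithm does not deliver
    split
    · next g' hOn' hq' =>
      have hg' := q1_some a sO t hO _ g' hq'
      by_cases hm : m = selO (sO.srcHist ++ [⟨a (t + 1), fun m => (t+1) - sO.tau m,
          fun m => if a (t + 1) m then some (t+1) else sO.queue m⟩])
      · subst hm
        simp only [Function.update_self]
        exact le_trans (hle _) (le_trans (htauO _) (le_of_eq hg'.symm))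
      · simp only [Function.update_of_ne hm]
        exact hle m
    · exact hle m

lemma Config.aux_tau_le_opt (cfg : Config M N) (paStar : SourcePolicy M) (nstar : Fin N)
    (hmu : ∀ n, cfg.mu n ≤ cfg.mu nstar) (ω : cfg.Ω) :
    ∀ t m, (cfg.auxRun paStar nstar ω t).tau m ≤ (cfg.optRun paStar nstar ω t).tau m := by
  intro t
  induction t with
  | zero => intro m; exact le_refl 0
  | succ t ih =>
    have hA : Inv (fun t m => cfg.A t m ω) (cfg.auxRun paStar nstar ω t) t :=
      inv_run cfg.mu (fun t _ => (cfg.optRun paStar nstar ω t).selSrc) (etabarB N)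
        (fun t m => cfg.A t m ω) (fun t => cfg.U t ω) (fun t => cfg.V t ω) t
    have hO : Inv (fun t m => cfg.A t m ω) (cfg.optRun paStar nstar ω t) t :=
      inv_run cfg.mu (fun _ L => paStar L) (optChannel N nstar)
        (fun t m => cfg.A t m ω) (fun t => cfg.U t ω) (fun t => cfg.V t ω) t
    have e : cfg.optRun paStar nstar ω (t + 1) =
        step cfg.mu (fun L => paStar L) (optChannel N nstar) (t + 1)
          (fun m => cfg.A (t + 1) m ω) (cfg.U (t + 1) ω) (cfg.V (t + 1) ω)
          (cfg.optRun paStar nstar ω t) := rfl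
    have hmsel : (cfg.optRun paStar nstar ω (t + 1)).selSrc =
        paStar ((cfg.optRun paStar nstar ω t).srcHist ++
          [⟨fun m => cfg.A (t + 1) m ω,
            fun m => (t + 1) - (cfg.optRun paStar nstar ω t).tau m,
            fun m => if cfg.A (t + 1) m ω then some (t + 1)
              else (cfg.optRun paStar nstar ω t).queue m⟩]) := by
      rw [e]
      exact step_selSrc' cfg.mu (fun L => paStar L) (optChannel N nstar) (t + 1)
        (fun m => cfg.A (t + 1) m ω) (cfg.U (t + 1) ω) (cfg.V (t + 1) ω)
        (cfg.optRun paStar nstar ω t)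
    exact step_tau_le cfg.mu nstar hmu
      (fun _ => (cfg.optRun paStar nstar ω (t + 1)).selSrc) (fun L => paStar L) (etabarB N)
      (fun t m => cfg.A t m ω) t (cfg.U (t + 1) ω) (cfg.V (t + 1) ω) (cfg.V (t + 1) ω)
      (cfg.auxRun paStar nstar ω t) (cfg.optRun paStar nstar ω t) hA hO ih hmsel

end AgingBandits

namespace AgingBandits

/-- **Equality of AoI at the start of every period (Lemma A.2 / proof of Lemma 4).**
At the first slot `s_p` of every period `p ≥ 1`, the AoI under the auxiliary algorithm `η̂`
equals the AoI under the optimal algorithm `π*` for every source `m`: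
`h^η̂_m(s_p) = h^{π*}_m(s_p)`. -/
theorem period_start_age_equal
    {M N : ℕ} [NeZero M] [NeZero N] (hM : 1 ≤ M) (hN : 2 ≤ N)
    (cfg : Config M N) (nstar : Fin N)
    (hstar : ∀ n, n ≠ nstar → cfg.mu n < cfg.mu nstar)
    (paStar : SourcePolicy M) (hWCstar : WorkConserving paStar)
    (ω : cfg.Ω) (p : ℕ) (hp : 1 ≤ p) (m : Fin M) :
    cfg.auxAge paStar nstar ω (cfg.periodStart paStar nstar ω p) m =
      cfg.optAge paStar nstar ω (cfg.periodStart paStar nstar ω p) m := by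
  have hmu : ∀ n, cfg.mu n ≤ cfg.mu nstar := by
    intro n
    by_cases hn : n = nstar
    · subst hn; exact le_refl _
    · exact (hstar n hn).le
  obtain ⟨q, rfl⟩ : ∃ q, p = q + 1 := ⟨p - 1, by omega⟩
  cases q with
  | zero =>
      show cfg.auxAge paStar nstar ω 1 m = cfg.optAge paStar nstar ω 1 m
      rfl
  | succ q =>
      have hps : cfg.periodStart paStar nstar ω (q + 1 + 1) =
          sInf {t | cfg.periodStart paStar nstar ω (q + 1) < t ∧
            (cfg.auxRun paStar nstar ω (t - 1)).emp = false ∧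
            (cfg.auxRun paStar nstar ω t).emp = true} := rfl
      rw [hps]
      by_cases hS : {t | cfg.periodStart paStar nstar ω (q + 1) < t ∧
          (cfg.auxRun paStar nstar ω (t - 1)).emp = false ∧
          (cfg.auxRun paStar nstar ω t).emp = true}.Nonempty
      · obtain ⟨h1, h2, h3⟩ := Nat.sInf_mem hS
        obtain ⟨t, ht⟩ : ∃ t, sInf {t | cfg.periodStart paStar nstar ω (q + 1) < t ∧
            (cfg.auxRun paStar nstar ω (t - 1)).emp = false ∧
            (cfg.auxRun paStar nstar ω t).emp = true} = t + 1 :=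
          ⟨sInf {t | cfg.periodStart paStar nstar ω (q + 1) < t ∧
            (cfg.auxRun paStar nstar ω (t - 1)).emp = false ∧
            (cfg.auxRun paStar nstar ω t).emp = true} - 1, by omega⟩
        rw [ht] at h3 ⊢
        have e : cfg.auxRun paStar nstar ω (t + 1) =
            step cfg.mu (fun _ => (cfg.optRun paStar nstar ω (t + 1)).selSrc) (etabarB N)
              (t + 1) (fun m => cfg.A (t + 1) m ω) (cfg.U (t + 1) ω) (cfg.V (t + 1) ω)
              (cfg.auxRun paStar nstar ω t) := rfl
        rw [e, step_emp'] at h3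
        have hq := of_decide_eq_true h3
        have hqn : (cfg.auxRun paStar nstar ω t).queue m = none := by
          have hm := hq m
          by_cases hc : cfg.A (t + 1) m ω <;> simp [hc] at hm <;> try exact hm
        have hAinv : Inv (fun t m => cfg.A t m ω) (cfg.auxRun paStar nstar ω t) t :=
          inv_run cfg.mu (fun t _ => (cfg.optRun paStar nstar ω t).selSrc) (etabarB N)
            (fun t m => cfg.A t m ω) (fun t => cfg.U t ω) (fun t => cfg.V t ω) t
        have hOinv : Inv (fun t m => cfg.A t m ω) (cfg.optRun paStar nstar ω t) t :=
          inv_run cfg.mu (fun _ L => paStar L) (optChannel N nstar)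
            (fun t m => cfg.A t m ω) (fun t => cfg.U t ω) (fun t => cfg.V t ω) t
        have htauA : (cfg.auxRun paStar nstar ω t).tau m =
            latest (fun t m => cfg.A t m ω) m t := (hAinv m).2.2 hqn
        have hle := cfg.aux_tau_le_opt paStar nstar hmu ω t m
        have htauO : (cfg.optRun paStar nstar ω t).tau m =
            latest (fun t m => cfg.A t m ω) m t :=
          le_antisymm (hOinv m).1 (htauA ▸ hle)
        show (t + 1) - (cfg.auxRun paStar nstar ω (t + 1 - 1)).tau m =
          (t + 1) - (cfg.optRun paStar nstar ω (t + 1 - 1)).tau m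
        simp only [Nat.add_sub_cancel]
        rw [htauA, htauO]
      · rw [Set.not_nonempty_iff_eq_empty.mp hS, Nat.sInf_empty]
        show (0 : ℕ) - _ = (0 : ℕ) - _
        simp

end AgingBandits
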